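/- Assume |v_1| ≤ |v_2| ≤ |v_3| and let 0 < ε_1 < ⋯ < ε_n be filtration levels with {|v_1|, |v_2|, |v_3|} ⊆ {ε_1, …, ε_n} and ε_n ≥ |v_3|. For each i ∈ {1, 2, 3}, the 1-cycle γ_i = {z, 0} + {z, v_i} + {0, v_i} defines a homology class in H_1(K̃_{ε}) for every ε ≥ |v_i| whose class at level |v_i| has persistence interval (|v_i|, ∞) in the sequence H_1(K̃_{ε_•}), and the three classes of γ_1, γ_2, γ_3 are linearly independent in H_1(K̃_{ε_n}). In particular, the 1st persistence barcode of the quotient-complex filtration contains infinite persistence intervals (b_1, ∞), (b_2, ∞), (b_3, ∞) with b_i = |v_i| for i = 1, 2, 3. -/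

import Mathlib

/-- An abstract simplicial complex on a vertex type `α`: a collection of nonempty
finite subsets of `α` closed under passing to nonempty subsets. -/
structure AbsSC (α : Type) where
  faces : Set (Finset α)
  not_empty_mem : ∅ ∉ faces
  down_closed : ∀ {s t : Finset α}, s ∈ faces → t ⊆ s → t.Nonempty → t ∈ faces

namespace AbsSC

variable {α : Type}

/-- The vertex set of an abstract simplicial complex. -/
def vertexSet (K : AbsSC α) : Set α := {v | {v} ∈ K.faces}

/-- The type of `q`-simplices (faces with `q+1` vertices). -/
def simplices (K : AbsSC α) (q : ℕ) : Type :=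
  {s : Finset α // s ∈ K.faces ∧ s.card = q + 1}

/-- The space of `q`-chains over `ℤ/2`: formal sums of `q`-simplices. -/
abbrev Chain (K : AbsSC α) (q : ℕ) : Type := K.simplices q →₀ ZMod 2

/-- The sum of the `q`-dimensional faces of a `(q+1)`-simplex. -/
noncomputable def faceChain (K : AbsSC α) (q : ℕ) (s : K.simplices (q + 1)) : K.Chain q :=
  ∑ t ∈ (s.1.powersetCard (q + 1)).attach,
    Finsupp.single
      ⟨t.1, by
        obtain ⟨hsub, hcard⟩ := Finset.mem_powersetCard.mp t.2
        refine ⟨K.down_closed s.2.1 hsub ?_, hcard⟩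
        rw [← Finset.card_pos, hcard]
        omega⟩
      (1 : ZMod 2)

/-- The boundary map `∂_{q+1} : C_{q+1}(K) → C_q(K)`, sending each `(q+1)`-simplex to
the sum of its `q`-dimensional faces. -/
noncomputable def boundary (K : AbsSC α) (q : ℕ) :
    K.Chain (q + 1) →ₗ[ZMod 2] K.Chain q :=
  Finsupp.lsum (ZMod 2) fun s => LinearMap.toSpanSingleton (ZMod 2) (K.Chain q) (K.faceChain q s)

/-- The cycle subspace: `ker ∂_q` (all of `C_0` in degree `0`). -/
noncomputable def cycles (K : AbsSC α) : (q : ℕ) → Submodule (ZMod 2) (K.Chain q)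
  | 0 => ⊤
  | q + 1 => LinearMap.ker (K.boundary q)

/-- The boundaries, viewed as a submodule of the cycles. -/
noncomputable def boundariesIn (K : AbsSC α) (q : ℕ) :
    Submodule (ZMod 2) (K.cycles q) :=
  Submodule.comap (K.cycles q).subtype (LinearMap.range (K.boundary q))

/-- The `q`-th simplicial homology over `ℤ/2`: `H_q(K) = ker ∂_q / im ∂_{q+1}`. -/
def Homology (K : AbsSC α) (q : ℕ) : Type :=
  (K.cycles q) ⧸ (K.boundariesIn q)

noncomputable instance (K : AbsSC α) (q : ℕ) : AddCommGroup (K.Homology q) :=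
  inferInstanceAs (AddCommGroup ((K.cycles q) ⧸ (K.boundariesIn q)))

noncomputable instance (K : AbsSC α) (q : ℕ) : Module (ZMod 2) (K.Homology q) :=
  inferInstanceAs (Module (ZMod 2) ((K.cycles q) ⧸ (K.boundariesIn q)))

/-- The homology class of a cycle. -/
noncomputable def hClass (K : AbsSC α) (q : ℕ) (c : K.Chain q) (hc : c ∈ K.cycles q) :
    K.Homology q :=
  Submodule.Quotient.mk ⟨c, hc⟩

/-- The chain map induced by an inclusion of simplicial complexes. -/
noncomputable def chainMap (K L : AbsSC α) (h : K.faces ⊆ L.faces) (q : ℕ) :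
    K.Chain q →ₗ[ZMod 2] L.Chain q :=
  Finsupp.lmapDomain (ZMod 2) (ZMod 2) fun s : K.simplices q =>
    (⟨s.1, h s.2.1, s.2.2⟩ : L.simplices q)

/-- `θ` is the map on `q`-th homology induced by the inclusion `K ⊆ L`: it sends the
class of every cycle `c` of `K` to the class of the image chain of `c` in `L`. -/
def InducedHom (K L : AbsSC α) (q : ℕ)
    (θ : K.Homology q →ₗ[ZMod 2] L.Homology q) : Prop :=
  ∃ h : K.faces ⊆ L.faces,
    ∀ (c : K.Chain q) (hc : c ∈ K.cycles q),
      ∃ hc' : chainMap K L h q c ∈ L.cycles q,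
        θ (K.hClass q c hc) = L.hClass q (chainMap K L h q c) hc'

end AbsSC

/-- The faces of the gluing stars `S = S_1 ⊔ ⋯ ⊔ S_k`: for each `j`, the vertex `{z j}`,
the vertices `{v}` for `v ∈ P j`, and the edges `{z j, v}` for `v ∈ P j`. -/
def starFaces {α : Type} [DecidableEq α] {k : ℕ} (P : Fin k → Set α) (z : Fin k → α) :
    Set (Finset α) :=
  {s | ∃ j : Fin k, s = {z j} ∨ ∃ v ∈ P j, s = {v} ∨ s = {z j, v}}

section Tower

variable {W : ℕ → Type} [∀ i, AddCommGroup (W i)] [∀ i, Module (ZMod 2) (W i)]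

/-- The composite `φ_{i,j} = φ_{j-1} ∘ ⋯ ∘ φ_i` of the connecting maps of a tower
(the identity when `i = j`). -/
noncomputable def comps (φ : ∀ i, W i →ₗ[ZMod 2] W (i + 1)) {i j : ℕ} (h : i ≤ j) :
    W i →ₗ[ZMod 2] W j :=
  Nat.leRecOn (C := fun m => W i →ₗ[ZMod 2] W m) h (fun {m} g => (φ m).comp g) LinearMap.id

/-- `s ∈ W b` has persistence interval `(b, d)` with finite death `d ∈ {b+1, …, n}`:
`s ∉ im φ_{b-1}`, `φ_{b,d'}(s) ∉ im φ_{b-1,d'}` for all `b ≤ d' < d`, and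
`φ_{b,d}(s) ∈ im φ_{b-1,d}`. -/
def HasPersIntervalFin (φ : ∀ i, W i →ₗ[ZMod 2] W (i + 1)) (n b d : ℕ) (s : W b) : Prop :=
  ∃ (_ : 1 ≤ b) (hbd : b < d) (_ : d ≤ n),
    s ∉ LinearMap.range (comps φ (Nat.sub_le b 1)) ∧
    (∀ (d' : ℕ) (hd' : b ≤ d'), d' < d →
      comps φ hd' s ∉ LinearMap.range (comps φ (Nat.le_trans (Nat.sub_le b 1) hd'))) ∧
    comps φ (Nat.le_of_lt hbd) s ∈
      LinearMap.range (comps φ (Nat.le_trans (Nat.sub_le b 1) (Nat.le_of_lt hbd)))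

/-- `s ∈ W b` has persistence interval `(b, ∞)`: `s ∉ im φ_{b-1}` and
`φ_{b,d'}(s) ∉ im φ_{b-1,d'}` for all `b ≤ d' ≤ n`. -/
def HasPersIntervalInf (φ : ∀ i, W i →ₗ[ZMod 2] W (i + 1)) (n b : ℕ) (s : W b) : Prop :=
  ∃ _ : 1 ≤ b,
    s ∉ LinearMap.range (comps φ (Nat.sub_le b 1)) ∧
    ∀ (d' : ℕ) (hd' : b ≤ d'), d' ≤ n →
      comps φ hd' s ∉ LinearMap.range (comps φ (Nat.le_trans (Nat.sub_le b 1) hd'))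

end Tower

/-- The four points of the extended motif `V = {v₀, v₁, v₂, v₃}` in `ℝ³`, where
`v₀ = (0,0,0)` is the motif point and `v₁, v₂, v₃` are the basis vectors. -/
noncomputable def pt (v : Fin 3 → EuclideanSpace ℝ (Fin 3)) :
    Fin 4 → EuclideanSpace ℝ (Fin 3) :=
  ![0, v 0, v 1, v 2]

/-- The faces of the Vietoris--Rips complex `K_ε` on the abstract vertex set
`{some 0, some 1, some 2, some 3}` (the vertex `none` is reserved for the gluing-star
vertex `z`): nonempty subsets of `V` all of whose pairwise bipartite extended
distances are at most `ε` (the distance being `+∞` between two distinct nonzero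
points, and the Euclidean distance otherwise). -/
def VRfaces (v : Fin 3 → EuclideanSpace ℝ (Fin 3)) (ε : ℝ) : Set (Finset (Option (Fin 4))) :=
  {s | s.Nonempty ∧ (∀ a ∈ s, a ≠ none) ∧
    ∀ u w : Fin 4, some u ∈ s → some w ∈ s →
      (u = w ∨ u = 0 ∨ w = 0) ∧ dist (pt v u) (pt v w) ≤ ε}

/-- The faces of the gluing star `S`: the single new vertex `z = none`, the vertices
of `V`, and the edges `{z, u}` for `u ∈ V` (all four points of `V` form a single
equivalence class under the periodic relation). -/
def starFaces18 : Set (Finset (Option (Fin 4))) :=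
  {s | s = {none} ∨ ∃ u : Fin 4, s = {some u} ∨ s = ({none, some u} : Finset (Option (Fin 4)))}

/-- The 1-cycle `γᵢ = {z, v₀} + {z, vᵢ} + {v₀, vᵢ}` (for `i = 1, 2, 3`;
here `i : Fin 3` and `vᵢ` is `some i.succ`). -/
noncomputable def gammaChain (Kt : AbsSC (Option (Fin 4))) (i : Fin 3)
    (h1 : ({none, some 0} : Finset (Option (Fin 4))) ∈ Kt.faces)
    (h2 : ({none, some i.succ} : Finset (Option (Fin 4))) ∈ Kt.faces)
    (h3 : ({some 0, some i.succ} : Finset (Option (Fin 4))) ∈ Kt.faces) :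
    Kt.Chain 1 :=
  Finsupp.single ⟨{none, some 0}, h1, by simp⟩ (1 : ZMod 2)
    + Finsupp.single ⟨{none, some i.succ}, h2, by simp⟩ (1 : ZMod 2)
    + Finsupp.single ⟨{some 0, some i.succ}, h3, by
        rw [Finset.card_pair (by simp [(Fin.succ_ne_zero i).symm])]⟩ (1 : ZMod 2)


namespace AbsSC
variable {α : Type} [DecidableEq α]

lemma faceChain_apply (K : AbsSC α) (s : K.simplices 1) (u : K.simplices 0) :
    K.faceChain 0 s u = if u.1 ⊆ s.1 then 1 else 0 := by
  classical
  rw [faceChain, Finsupp.finset_sum_apply]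
  refine (Finset.sum_congr rfl (fun t _ => Finsupp.single_apply)).trans ?_
  have key : ∀ (t : Finset α) (pf : t ∈ K.faces ∧ t.card = 0 + 1),
      ((⟨t, pf⟩ : K.simplices 0) = u) = (t = u.1) := fun t pf =>
    propext ⟨fun h => congrArg Subtype.val h, fun h => Subtype.ext h⟩
  simp only [key]
  rw [Finset.sum_attach (s.1.powersetCard 1) (fun t => if t = u.1 then (1 : ZMod 2) else 0)]
  rw [Finset.sum_ite_eq' (s.1.powersetCard 1) u.1 (fun _ => (1 : ZMod 2))]
  congr 1
  rw [Finset.mem_powersetCard]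
  simp [u.2.2]

omit [DecidableEq α] in
lemma boundary_single (K : AbsSC α) (q : ℕ) (s : K.simplices (q + 1)) :
    K.boundary q (Finsupp.single s (1 : ZMod 2)) = K.faceChain q s := by
  rw [boundary, Finsupp.lsum_single, LinearMap.toSpanSingleton_apply, one_smul]

open Classical in
noncomputable def coeffAt (K : AbsSC α) (T : Finset α) : K.Chain 1 →ₗ[ZMod 2] ZMod 2 :=
  Finsupp.lsum (ZMod 2) fun s => if s.1 = T then LinearMap.id else 0

lemma coeffAt_single (K : AbsSC α) (T : Finset α) (s : K.simplices 1) (r : ZMod 2) :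
    K.coeffAt T (Finsupp.single s r) = if s.1 = T then r else 0 := by
  rw [coeffAt, Finsupp.lsum_single]
  split <;> simp

lemma coeffAt_chainMap (K L : AbsSC α) (h : K.faces ⊆ L.faces) (T : Finset α)
    (c : K.Chain 1) : L.coeffAt T (chainMap K L h 1 c) = K.coeffAt T c := by
  induction c using Finsupp.induction_linear with
  | zero => simp
  | add a b ha hb => rw [map_add, map_add, map_add, ha, hb]
  | single s r =>
    erw [chainMap, Finsupp.lmapDomain_apply, Finsupp.mapDomain_single,
      coeffAt_single, coeffAt_single]

lemma coeffAt_eq_zero (K : AbsSC α) (T : Finset α) (hT : ∀ s : K.simplices 1, s.1 ≠ T)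
    (c : K.Chain 1) : K.coeffAt T c = 0 := by
  induction c using Finsupp.induction_linear with
  | zero => simp
  | add a b ha hb => rw [map_add, ha, hb, add_zero]
  | single s r => rw [coeffAt_single, if_neg (hT s)]

omit [DecidableEq α] in
lemma chain2_zero (K : AbsSC α) (h : ∀ s ∈ K.faces, s.card ≤ 2) (c : K.Chain 2) : c = 0 := by
  ext s
  exact absurd s.2.2 (by have := h s.1 s.2.1; omega)

noncomputable def hcoeff (K : AbsSC α) (T : Finset α) (h2 : ∀ c : K.Chain 2, c = 0) :
    K.Homology 1 →ₗ[ZMod 2] ZMod 2 :=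
  Submodule.liftQ (K.boundariesIn 1) ((K.coeffAt T).comp (K.cycles 1).subtype) (by
    intro x hx
    obtain ⟨y, hy⟩ := hx
    rw [h2 y, map_zero] at hy
    rw [LinearMap.mem_ker, LinearMap.comp_apply, Submodule.subtype_apply,
      show ((x : K.Chain 1)) = 0 from hy.symm, map_zero])

lemma hcoeff_hClass (K : AbsSC α) (T : Finset α) (h2 : ∀ c : K.Chain 2, c = 0)
    (c : K.Chain 1) (hc : c ∈ K.cycles 1) :
    K.hcoeff T h2 (K.hClass 1 c hc) = K.coeffAt T c := rfl

omit [DecidableEq α] in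
lemma hClass_surj (K : AbsSC α) (x : K.Homology 1) :
    ∃ (c : K.Chain 1) (hc : c ∈ K.cycles 1), x = K.hClass 1 c hc := by
  obtain ⟨y, rfl⟩ := Submodule.mkQ_surjective (K.boundariesIn 1) x
  exact ⟨y.1, y.2, rfl⟩

lemma hcoeff_inducedHom (K L : AbsSC α) (T : Finset α)
    (h2K : ∀ c : K.Chain 2, c = 0) (h2L : ∀ c : L.Chain 2, c = 0)
    (θ : K.Homology 1 →ₗ[ZMod 2] L.Homology 1) (hθ : InducedHom K L 1 θ)
    (x : K.Homology 1) : L.hcoeff T h2L (θ x) = K.hcoeff T h2K x := by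
  obtain ⟨c, hc, rfl⟩ := hClass_surj K x
  obtain ⟨h, hcomm⟩ := hθ
  obtain ⟨hc', heq⟩ := hcomm c hc
  rw [heq, hcoeff_hClass, hcoeff_hClass, coeffAt_chainMap]

end AbsSC

section Tower
variable {W : ℕ → Type} [∀ i, AddCommGroup (W i)] [∀ i, Module (ZMod 2) (W i)]

lemma comps_self (φ : ∀ i, W i →ₗ[ZMod 2] W (i + 1)) {i : ℕ} (h : i ≤ i) :
    comps φ h = LinearMap.id :=
  Nat.leRecOn_self _

lemma comps_succ (φ : ∀ i, W i →ₗ[ZMod 2] W (i + 1)) {i j : ℕ} (hij : i ≤ j)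
    (h2 : i ≤ j + 1) : comps φ h2 = (φ j).comp (comps φ hij) :=
  Nat.leRecOn_succ _ _

end Tower

lemma pt_zero (v : Fin 3 → EuclideanSpace ℝ (Fin 3)) : pt v 0 = 0 := rfl

lemma pt_succ (v : Fin 3 → EuclideanSpace ℝ (Fin 3)) (i : Fin 3) : pt v i.succ = v i := by
  fin_cases i <;> rfl

lemma dist_pt (v : Fin 3 → EuclideanSpace ℝ (Fin 3)) (i : Fin 3) :
    dist (pt v 0) (pt v i.succ) = ‖v i‖ := by
  rw [pt_zero, pt_succ, dist_zero_left]

lemma star_mem_edge (u : Fin 4) :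
    ({none, some u} : Finset (Option (Fin 4))) ∈ starFaces18 :=
  Or.inr ⟨u, Or.inr rfl⟩

lemma VR_mem_edge (v : Fin 3 → EuclideanSpace ℝ (Fin 3)) (ε : ℝ) (hε : 0 ≤ ε) (i : Fin 3)
    (h : ‖v i‖ ≤ ε) :
    ({some 0, some i.succ} : Finset (Option (Fin 4))) ∈ VRfaces v ε := by
  refine ⟨⟨some 0, by simp⟩, ?_, ?_⟩
  · intro a ha
    simp only [Finset.mem_insert, Finset.mem_singleton] at ha
    rcases ha with rfl | rfl <;> simp
  · intro u w hu hw
    simp only [Finset.mem_insert, Finset.mem_singleton, Option.some.injEq] at hu hw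
    rcases hu with rfl | rfl <;> rcases hw with rfl | rfl
    · exact ⟨Or.inl rfl, by rw [dist_self]; exact hε⟩
    · exact ⟨Or.inr (Or.inl rfl), by rw [dist_pt]; exact h⟩
    · exact ⟨Or.inr (Or.inr rfl), by rw [dist_comm, dist_pt]; exact h⟩
    · exact ⟨Or.inl rfl, by rw [dist_self]; exact hε⟩

lemma edge_not_mem (v : Fin 3 → EuclideanSpace ℝ (Fin 3)) (ε : ℝ) (i : Fin 3)
    (h : ε < ‖v i‖) :
    ({some 0, some i.succ} : Finset (Option (Fin 4))) ∉ VRfaces v ε ∪ starFaces18 := by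
  rintro (⟨-, -, hp⟩ | hstar)
  · have := (hp 0 i.succ (by simp) (by simp)).2
    rw [dist_pt] at this
    linarith
  · rcases hstar with hs | ⟨u, hs | hs⟩
    · have : (some (0 : Fin 4) : Option (Fin 4)) ∈ ({none} : Finset (Option (Fin 4))) := by
        rw [← hs]; simp
      simp at this
    · have h0 : (some (0 : Fin 4) : Option (Fin 4)) ∈ ({some u} : Finset (Option (Fin 4))) := by
        rw [← hs]; simp
      have hsucc : (some i.succ : Option (Fin 4)) ∈ ({some u} : Finset (Option (Fin 4))) := by
        rw [← hs]; simp
      simp only [Finset.mem_singleton, Option.some.injEq] at h0 hsucc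
      exact Fin.succ_ne_zero i (hsucc.trans h0.symm)
    · have : (none : Option (Fin 4)) ∈
          ({some (0 : Fin 4), some i.succ} : Finset (Option (Fin 4))) := by
        rw [hs]; simp
      simp at this

lemma VR_card_le (v : Fin 3 → EuclideanSpace ℝ (Fin 3)) (ε : ℝ) (s : Finset (Option (Fin 4)))
    (hs : s ∈ VRfaces v ε ∪ starFaces18) : s.card ≤ 2 := by
  rcases hs with ⟨-, hnone, hp⟩ | hstar
  · have hsome : ∀ a ∈ s, ∃ u : Fin 4, a = some u := by
      intro a ha
      cases a with
      | none => exact absurd rfl (hnone none ha)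
      | some u => exact ⟨u, rfl⟩
    by_cases hw : ∃ w : Fin 4, some w ∈ s ∧ w ≠ 0
    · obtain ⟨w, hws, hw0⟩ := hw
      have hsub : s ⊆ {some 0, some w} := by
        intro a ha
        obtain ⟨u, rfl⟩ := hsome a ha
        rcases (hp u w ha hws).1 with rfl | rfl | rfl
        · simp
        · simp
        · exact absurd rfl hw0
      refine (Finset.card_le_card hsub).trans ((Finset.card_insert_le _ _).trans ?_)
      simp
    · push_neg at hw
      have hsub : s ⊆ {some 0} := by
        intro a ha
        obtain ⟨u, rfl⟩ := hsome a ha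
        rw [hw u ha]
        simp
      exact (Finset.card_le_card hsub).trans (by simp)
  · rcases hstar with rfl | ⟨u, rfl | rfl⟩
    · simp
    · simp
    · refine (Finset.card_insert_le _ _).trans ?_
      simp

open AbsSC in
lemma gamma_cycle (K : AbsSC (Option (Fin 4))) (i : Fin 3)
    (h1 : ({none, some 0} : Finset (Option (Fin 4))) ∈ K.faces)
    (h2 : ({none, some i.succ} : Finset (Option (Fin 4))) ∈ K.faces)
    (h3 : ({some 0, some i.succ} : Finset (Option (Fin 4))) ∈ K.faces) :
    gammaChain K i h1 h2 h3 ∈ K.cycles 1 := by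
  show gammaChain K i h1 h2 h3 ∈ LinearMap.ker (K.boundary 0)
  erw [LinearMap.mem_ker, gammaChain, map_add, map_add,
    boundary_single, boundary_single, boundary_single]
  ext u
  simp only [Finsupp.add_apply, Finsupp.coe_zero, Pi.zero_apply]
  erw [faceChain_apply, faceChain_apply, faceChain_apply]
  obtain ⟨a, ha⟩ := Finset.card_eq_one.mp u.2.2
  rw [ha]
  simp only [Finset.singleton_subset_iff, Finset.mem_insert, Finset.mem_singleton]
  rcases a with _ | u
  · simp; decide
  · by_cases h0 : u = 0
    · subst h0
      simp [(Fin.succ_ne_zero i).symm]; decide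
    · by_cases hs : u = i.succ
      · subst hs
        simp [Fin.succ_ne_zero i]; decide
      · simp [h0, hs]

lemma coeffAt_gamma (K : AbsSC (Option (Fin 4))) (j : Fin 3)
    (h1 : ({none, some 0} : Finset (Option (Fin 4))) ∈ K.faces)
    (h2 : ({none, some j.succ} : Finset (Option (Fin 4))) ∈ K.faces)
    (h3 : ({some 0, some j.succ} : Finset (Option (Fin 4))) ∈ K.faces) (i : Fin 3) :
    K.coeffAt {some 0, some i.succ} (gammaChain K j h1 h2 h3)
      = if j = i then 1 else 0 := by
  have hne1 : ({none, some 0} : Finset (Option (Fin 4))) ≠ {some 0, some i.succ} := by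
    intro h
    have : (none : Option (Fin 4)) ∈ ({some 0, some i.succ} : Finset (Option (Fin 4))) := by
      rw [← h]; simp
    simp at this
  have hne2 : ({none, some j.succ} : Finset (Option (Fin 4))) ≠ {some 0, some i.succ} := by
    intro h
    have : (none : Option (Fin 4)) ∈ ({some 0, some i.succ} : Finset (Option (Fin 4))) := by
      rw [← h]; simp
    simp at this
  have h3iff : (({some 0, some j.succ} : Finset (Option (Fin 4))) = {some 0, some i.succ})
      = (j = i) := by
    apply propext
    constructor
    · intro h
      have : (some j.succ : Option (Fin 4)) ∈
          ({some 0, some i.succ} : Finset (Option (Fin 4))) := by rw [← h]; simp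
      simp only [Finset.mem_insert, Finset.mem_singleton, Option.some.injEq] at this
      rcases this with h' | h'
      · exact absurd h' (Fin.succ_ne_zero j)
      · exact Fin.succ_injective 3 h'
    · rintro rfl; rfl
  erw [gammaChain, map_add, map_add, AbsSC.coeffAt_single, AbsSC.coeffAt_single,
    AbsSC.coeffAt_single]
  rw [if_neg hne1, if_neg hne2]
  simp only [h3iff]
  simp

/-- for a basis `{v₁, v₂, v₃}` of `ℝ³` with `|v₁| ≤ |v₂| ≤ |v₃|`, motif
`{(0,0,0)}` and extended point cloud `V`, filtration levels `0 < ε 1 < ⋯ < ε n`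
containing `|v₁|, |v₂|, |v₃|` with `ε n ≥ |v₃|`, and the quotient-complex filtration
`K̃_{ε_•}` (realized by the gluing-star complexes `Kt i` with faces
`VRfaces v (ε i) ∪ starFaces18`): each 1-cycle `γᵢ = {z,0} + {z,vᵢ} + {0,vᵢ}` defines a
homology class in `H₁(K̃_ε)` for every level `ε ≥ |vᵢ|`, whose class at the level
`|vᵢ|` has persistence interval `(|vᵢ|, ∞)`, and the three classes of `γ₁, γ₂, γ₃` are
linearly independent in `H₁(K̃_{ε_n})`.  In particular, the 1st persistence barcode of
the quotient-complex filtration contains infinite intervals `(bᵢ, ∞)` with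
`bᵢ = |vᵢ|`. -/
theorem stmt18 (v : Fin 3 → EuclideanSpace ℝ (Fin 3))
    (hvli : LinearIndependent ℝ v)
    (hvspan : Submodule.span ℝ (Set.range v) = ⊤)
    (hord1 : ‖v 0‖ ≤ ‖v 1‖) (hord2 : ‖v 1‖ ≤ ‖v 2‖)
    (n : ℕ) (hn : 1 ≤ n)
    (ε : ℕ → ℝ)
    (hεpos : 0 < ε 1)
    (hεmono : ∀ i j, 1 ≤ i → i < j → j ≤ n → ε i < ε j)
    (hεlev : ∀ i : Fin 3, ∃ m, 1 ≤ m ∧ m ≤ n ∧ ε m = ‖v i‖)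
    (hεtop : ‖v 2‖ ≤ ε n)
    (Kt : ℕ → AbsSC (Option (Fin 4)))
    (hKt0 : (Kt 0).faces = ∅)
    (hKt : ∀ i, 1 ≤ i → i ≤ n → (Kt i).faces = VRfaces v (ε i) ∪ starFaces18)
    (ψ : ∀ i : ℕ, (Kt i).Homology 1 →ₗ[ZMod 2] (Kt (i + 1)).Homology 1)
    (hψ : ∀ i, i < n → AbsSC.InducedHom (Kt i) (Kt (i + 1)) 1 (ψ i)) :
    (∀ (i : Fin 3) (m : ℕ), 1 ≤ m → m ≤ n → ‖v i‖ ≤ ε m →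
      ∃ (h1 : ({none, some 0} : Finset (Option (Fin 4))) ∈ (Kt m).faces)
        (h2 : ({none, some i.succ} : Finset (Option (Fin 4))) ∈ (Kt m).faces)
        (h3 : ({some 0, some i.succ} : Finset (Option (Fin 4))) ∈ (Kt m).faces),
        gammaChain (Kt m) i h1 h2 h3 ∈ (Kt m).cycles 1) ∧
    (∀ (i : Fin 3) (m : ℕ), 1 ≤ m → m ≤ n → ε m = ‖v i‖ →
      ∃ (h1 : ({none, some 0} : Finset (Option (Fin 4))) ∈ (Kt m).faces)
        (h2 : ({none, some i.succ} : Finset (Option (Fin 4))) ∈ (Kt m).faces)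
        (h3 : ({some 0, some i.succ} : Finset (Option (Fin 4))) ∈ (Kt m).faces)
        (hcyc : gammaChain (Kt m) i h1 h2 h3 ∈ (Kt m).cycles 1),
        HasPersIntervalInf ψ n m ((Kt m).hClass 1 (gammaChain (Kt m) i h1 h2 h3) hcyc)) ∧
    (∃ (h1 : ({none, some 0} : Finset (Option (Fin 4))) ∈ (Kt n).faces)
        (h2 : ∀ i : Fin 3, ({none, some i.succ} : Finset (Option (Fin 4))) ∈ (Kt n).faces)
        (h3 : ∀ i : Fin 3, ({some 0, some i.succ} : Finset (Option (Fin 4))) ∈ (Kt n).faces)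
        (hcyc : ∀ i : Fin 3, gammaChain (Kt n) i h1 (h2 i) (h3 i) ∈ (Kt n).cycles 1),
      LinearIndependent (ZMod 2)
        (fun i : Fin 3 =>
          (Kt n).hClass 1 (gammaChain (Kt n) i h1 (h2 i) (h3 i)) (hcyc i))) := by

  have hεnn : ∀ m, 1 ≤ m → m ≤ n → 0 < ε m := by
    intro m h1 hm
    rcases Nat.eq_or_lt_of_le h1 with h | h
    · rw [← h]; exact hεpos
    · exact hεpos.trans (hεmono 1 m le_rfl h hm)
  have hT2 : ∀ m, m ≤ n → ∀ c : (Kt m).Chain 2, c = 0 := by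
    intro m hm
    rcases Nat.eq_zero_or_pos m with rfl | h1
    · intro c
      ext s
      exact absurd s.2.1 (Set.eq_empty_iff_forall_notMem.mp hKt0 _)
    · exact AbsSC.chain2_zero _ (fun s hs => VR_card_le v (ε m) s (by rwa [← hKt m h1 hm]))
  have hstar : ∀ m (u : Fin 4), 1 ≤ m → m ≤ n →
      ({none, some u} : Finset (Option (Fin 4))) ∈ (Kt m).faces := by
    intro m u h1 hm
    rw [hKt m h1 hm]
    exact Or.inr (star_mem_edge u)
  have hedge : ∀ m (i : Fin 3), 1 ≤ m → m ≤ n → ‖v i‖ ≤ ε m →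
      ({some 0, some i.succ} : Finset (Option (Fin 4))) ∈ (Kt m).faces := by
    intro m i h1 hm h
    rw [hKt m h1 hm]
    exact Or.inl (VR_mem_edge v (ε m) (hεnn m h1 hm).le i h)
  have hnotmem : ∀ (i : Fin 3) (m : ℕ), 1 ≤ m → m ≤ n → ε m = ‖v i‖ →
      ({some 0, some i.succ} : Finset (Option (Fin 4))) ∉ (Kt (m - 1)).faces := by
    intro i m h1 hm hεm
    rcases Nat.eq_or_lt_of_le h1 with h | h
    · rw [← h]
      rw [show (1 : ℕ) - 1 = 0 from rfl]
      exact Set.eq_empty_iff_forall_notMem.mp hKt0 _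
    · have h1' : 1 ≤ m - 1 := by omega
      have hm' : m - 1 ≤ n := by omega
      rw [hKt (m - 1) h1' hm']
      refine edge_not_mem v (ε (m - 1)) i ?_
      have := hεmono (m - 1) m h1' (by omega) hm
      rw [hεm] at this
      exact this
  have hcomps : ∀ (i : Fin 3) (a b : ℕ) (hab : a ≤ b) (hb : b ≤ n) (x : (Kt a).Homology 1),
      (Kt b).hcoeff {some 0, some i.succ} (hT2 b hb) (comps ψ hab x)
        = (Kt a).hcoeff {some 0, some i.succ} (hT2 a (hab.trans hb)) x := by
    intro i a b hab
    induction b, hab using Nat.le_induction with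
    | base =>
      intro hb x
      rw [comps_self ψ (le_refl a)]
      rfl
    | succ b hab ih =>
      intro hb x
      rw [comps_succ ψ hab (hab.trans (Nat.le_succ b)), LinearMap.comp_apply]
      rw [AbsSC.hcoeff_inducedHom (Kt b) (Kt (b + 1)) _ (hT2 b (Nat.le_of_succ_le hb))
        (hT2 (b + 1) hb) (ψ b) (hψ b hb) (comps ψ hab x)]
      exact ih (Nat.le_of_succ_le hb) x
  have hvanish : ∀ (i : Fin 3) (m : ℕ) (hm : m ≤ n),
      ({some 0, some i.succ} : Finset (Option (Fin 4))) ∉ (Kt m).faces →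
      ∀ x, (Kt m).hcoeff {some 0, some i.succ} (hT2 m hm) x = 0 := by
    intro i m hm hT x
    obtain ⟨c, hc, rfl⟩ := AbsSC.hClass_surj (Kt m) x
    rw [AbsSC.hcoeff_hClass]
    exact AbsSC.coeffAt_eq_zero _ _ (fun s hs => hT (by rw [← hs]; exact s.2.1)) c
  have hval : ∀ (i : Fin 3) (m : ℕ) (hm : m ≤ n) h1 h2 h3
      (hc : gammaChain (Kt m) i h1 h2 h3 ∈ (Kt m).cycles 1),
      (Kt m).hcoeff {some 0, some i.succ} (hT2 m hm)
        ((Kt m).hClass 1 (gammaChain (Kt m) i h1 h2 h3) hc) = 1 := by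
    intro i m hm h1 h2 h3 hc
    rw [AbsSC.hcoeff_hClass, coeffAt_gamma]
    simp
  refine ⟨?_, ?_, ?_⟩
  · intro i m hm1 hmn hle
    exact ⟨hstar m 0 hm1 hmn, hstar m i.succ hm1 hmn, hedge m i hm1 hmn hle,
      gamma_cycle _ i _ _ _⟩
  · intro i m hm1 hmn hεm
    have hb1 := hstar m 0 hm1 hmn
    have hb2 := hstar m i.succ hm1 hmn
    have hb3 := hedge m i hm1 hmn hεm.ge
    have hcyc := gamma_cycle (Kt m) i hb1 hb2 hb3
    refine ⟨hb1, hb2, hb3, hcyc, hm1, ?_, ?_⟩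
    · rintro ⟨y, hy⟩
      have e := hcomps i (m - 1) m (Nat.sub_le m 1) hmn y
      rw [hy] at e
      have h10 : (1 : ZMod 2) = 0 :=
        (hval i m hmn hb1 hb2 hb3 hcyc).symm.trans
          (e.trans (hvanish i (m - 1) (Nat.le_trans (Nat.sub_le m 1) hmn)
            (hnotmem i m hm1 hmn hεm) y))
      exact one_ne_zero h10
    · intro d' hd' hd'n
      rintro ⟨y, hy⟩
      have e1 := hcomps i m d' hd' hd'n
        ((Kt m).hClass 1 (gammaChain (Kt m) i hb1 hb2 hb3) hcyc)
      have e2 := hcomps i (m - 1) d' (Nat.le_trans (Nat.sub_le m 1) hd') hd'n y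
      rw [hy] at e2
      have hA := (e1.trans (hval i m hmn hb1 hb2 hb3 hcyc)).symm.trans
        (e2.trans (hvanish i (m - 1)
          (Nat.le_trans (Nat.le_trans (Nat.sub_le m 1) hd') hd'n)
          (hnotmem i m hm1 hmn hεm) y))
      exact one_ne_zero hA
  · have h1 := hstar n 0 hn le_rfl
    have h2 := fun i : Fin 3 => hstar n i.succ hn le_rfl
    have hv2 : ∀ i : Fin 3, ‖v i‖ ≤ ε n := by
      intro i
      fin_cases i
      · exact (hord1.trans hord2).trans hεtop
      · exact hord2.trans hεtop
      · exact hεtop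
    have h3 := fun i : Fin 3 => hedge n i hn le_rfl (hv2 i)
    refine ⟨h1, h2, h3, fun i => gamma_cycle _ i _ _ _, ?_⟩
    rw [Fintype.linearIndependent_iff]
    intro g hg i
    have hgi := congrArg ((Kt n).hcoeff {some 0, some i.succ} (hT2 n le_rfl)) hg
    rw [map_sum, map_zero] at hgi
    simp only [map_smul, AbsSC.hcoeff_hClass, coeffAt_gamma, smul_eq_mul, mul_ite, mul_one,
      mul_zero, Finset.sum_ite_eq', Finset.mem_univ, if_true] at hgi
    exact hgi
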